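/- Let D be a DAG on nodes V = {1,...,d} with reachability relation An(i) (ancestors of i including i), and let B̄ = (b̄_{ij}) be a nonnegative d×d matrix with b̄_{ji} > 0 iff j ∈ An(i), and with each column summing to 1 (∑_{k∈An(i)} b̄_{ki} = 1). Assume for all i ∈ V, k ∈ an(i), j ∈ an(k) that b̄_{ji} ≥ b̄_{jk} b̄_{ki} / b̄_{kk}. Then for all distinct i, j ∈ V one has b̄_{jj} > b̄_{ji}. -/

import Mathlib

open Finset
open scoped Classical

/-- `anc E j i`: there is a directed path (length ≥ 1) from `j` to `i`, i.e. `j` is a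
strict ancestor of `i` in the directed graph with edge relation `E`. -/
def anc {d : ℕ} (E : Fin d → Fin d → Prop) (j i : Fin d) : Prop :=
  Relation.TransGen E j i

/-- `Anc E j i`: `j` is an ancestor of `i`, including `j = i`. -/
def Anc {d : ℕ} (E : Fin d → Fin d → Prop) (j i : Fin d) : Prop :=
  j = i ∨ Relation.TransGen E j i

/-- The tail dependence coefficient associated to a (standardized) max-linear
coefficient matrix `B`: `χ(i,j) = ∑_{k ∈ An(i) ∩ An(j)} min (B k i) (B k j)`. -/
noncomputable def tdc {d : ℕ} (E : Fin d → Fin d → Prop)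
    (B : Matrix (Fin d) (Fin d) ℝ) (i j : Fin d) : ℝ :=
  ∑ k ∈ Finset.univ.filter (fun k => Anc E k i ∧ Anc E k j), min (B k i) (B k j)

theorem stmt0 {d : ℕ} (E : Fin d → Fin d → Prop)
    (hacyc : ∀ i, ¬ anc E i i)
    (B : Matrix (Fin d) (Fin d) ℝ)
    (hnn : ∀ j i, 0 ≤ B j i)
    (hsgn : ∀ j i, 0 < B j i ↔ Anc E j i)
    (hcol : ∀ i, ∑ k ∈ Finset.univ.filter (fun k => Anc E k i), B k i = 1)
    (hineq : ∀ i k j, anc E k i → anc E j k → B j k * B k i / B k k ≤ B j i) :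
    ∀ i j, i ≠ j → B j i < B j j := by
  intro i j hne
  have hjj : 0 < B j j := (hsgn j j).2 (Or.inl rfl)
  by_cases hji : Anc E j i
  · have hanc : anc E j i := hji.resolve_left hne.symm
    by_contra hle
    push_neg at hle
    set S := Finset.univ.filter (fun k => Anc E k j) with hS
    set T := Finset.univ.filter (fun k => Anc E k i) with hT
    have hST : S ⊆ T := by
      intro k hk
      simp only [hS, hT, mem_filter, mem_univ, true_and] at hk ⊢
      rcases hk with rfl | h
      · exact Or.inr hanc
      · exact Or.inr (h.trans hanc)
    have hiT : i ∈ T := by simp only [hT, mem_filter, mem_univ, true_and]; exact Or.inl rfl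
    have hiS : i ∉ S := by
      simp only [hS, mem_filter, mem_univ, true_and]; simp only [Anc]
      rintro (rfl | h)
      · exact hne rfl
      · exact hacyc i (h.trans hanc)
    have hpt : ∀ k ∈ S, B k j ≤ B k i := by
      intro k hk
      simp only [hS, mem_filter, mem_univ, true_and] at hk
      rcases hk with rfl | h
      · exact hle
      · have h2 := hineq i j k hanc h
        have h1 : B k j = B k j * B j j / B j j := by field_simp
        calc B k j = B k j * B j j / B j j := h1
          _ ≤ B k j * B j i / B j j := by gcongr; exact hnn k j
          _ ≤ B k i := h2
    have hsum1 : (1:ℝ) ≤ ∑ k ∈ S, B k i := by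
      rw [← hcol j]; exact Finset.sum_le_sum hpt
    have hsum2 : ∑ k ∈ insert i S, B k i ≤ 1 := by
      rw [← hcol i]
      apply Finset.sum_le_sum_of_subset_of_nonneg
      · intro k hk
        rcases Finset.mem_insert.1 hk with rfl | hk
        · exact hiT
        · exact hST hk
      · intro k _ _; exact hnn k i
    rw [Finset.sum_insert hiS] at hsum2
    have hii : 0 < B i i := (hsgn i i).2 (Or.inl rfl)
    linarith
  · have h0 : ¬ 0 < B j i := fun h => hji ((hsgn j i).1 h)
    have : B j i ≤ 0 := le_of_not_gt h0
    linarith
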